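/- For any probability distribution μ on a finite alphabet of size M and any n ∈ ℕ with n ≥ 1, there exists a type ν ∈ T_n (an empirical distribution of some length-n sequence) with |μ(i) − ν(i)| ≤ 1/n for all i, supp(ν) ⊆ supp(μ), and hence total variation distance d_TV(μ, ν) ≤ M/(2n). -/

import Mathlib

/-- For any probability distribution `μ` on an alphabet of size `M` and any `n ≥ 1`,
there is a type `ν` (a distribution whose probabilities are integer multiples of `1/n`)
with `|μ i - ν i| ≤ 1/n` for all `i`, `supp ν ⊆ supp μ`, and `d_TV(μ,ν) ≤ M/(2n)`. -/
theorem stmt18 (M n : ℕ) (hn : 0 < n) (μ : Fin M → ℝ)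
    (hμ0 : ∀ i, 0 ≤ μ i) (hμ1 : ∑ i, μ i = 1) :
    ∃ ν : Fin M → ℝ,
      (∀ i, ∃ k : ℕ, ν i = (k : ℝ) / n) ∧
      (∑ i, ν i = 1) ∧
      (∀ i, |μ i - ν i| ≤ 1 / n) ∧
      (∀ i, ν i ≠ 0 → μ i ≠ 0) ∧
      (1 / 2) * ∑ i, |μ i - ν i| ≤ M / (2 * n) := by
  have hnR : (0:ℝ) < n := by exact_mod_cast hn
  set g : ℕ → ℝ := fun j => if h : j < M then μ ⟨j, h⟩ else 0 with hg
  have hg0 : ∀ j, 0 ≤ g j := by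
    intro j; simp only [hg]; split
    · exact hμ0 _
    · exact le_refl 0
  set S : ℕ → ℝ := fun k => ∑ j ∈ Finset.range k, g j with hS
  set c : ℕ → ℤ := fun k => ⌊(n : ℝ) * S k⌋ with hc
  have hSsucc : ∀ k, S (k+1) = S k + g k := by
    intro k; simp [hS, Finset.sum_range_succ]
  have hcmono : ∀ k, c k ≤ c (k+1) := by
    intro k
    exact Int.floor_mono (by
      have := hg0 k
      have h1 : S k ≤ S (k+1) := by rw [hSsucc]; linarith
      exact mul_le_mul_of_nonneg_left h1 hnR.le)
  have hSM : S M = 1 := by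
    rw [← hμ1]
    show ∑ j ∈ Finset.range M, g j = _
    rw [← Fin.sum_univ_eq_sum_range g M]
    exact Finset.sum_congr rfl (fun i _ => by simp [hg, i.isLt])
  have hc0 : c 0 = 0 := by simp [hc, hS]
  have hcM : c M = n := by
    simp [hc, hSM]
  set ν : Fin M → ℝ := fun i => ((c (i.val+1) - c i.val : ℤ) : ℝ) / n with hν
  have hcub : ∀ k, ((c k : ℝ)) ≤ (n:ℝ) * S k := fun k => Int.floor_le _
  have hclb : ∀ k, (n:ℝ) * S k - 1 < (c k : ℝ) := fun k => Int.sub_one_lt_floor _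
  have hgi : ∀ i : Fin M, g i.val = μ i := by
    intro i; simp [hg, i.isLt]
  have key : ∀ i : Fin M, |(n:ℝ) * μ i - ((c (i.val+1) - c i.val : ℤ) : ℝ)| ≤ 1 := by
    intro i
    have h1 := hcub (i.val+1)
    have h2 := hclb (i.val+1)
    have h3 := hcub i.val
    have h4 := hclb i.val
    have h5 : (n:ℝ) * S (i.val+1) = (n:ℝ) * S i.val + (n:ℝ) * μ i := by
      rw [hSsucc, hgi]; ring
    rw [abs_le]
    push_cast
    constructor <;> linarith
  have habs : ∀ i : Fin M, |μ i - ν i| ≤ 1 / n := by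
    intro i
    have : μ i - ν i = ((n:ℝ) * μ i - ((c (i.val+1) - c i.val : ℤ) : ℝ)) / n := by
      field_simp [hν]
      simp only [hν]; rw [sub_mul, div_mul_cancel₀ _ hnR.ne']
    rw [this, abs_div, abs_of_pos hnR]
    exact div_le_div_of_nonneg_right (key i) hnR.le
  refine ⟨ν, ?_, ?_, habs, ?_, ?_⟩
  · intro i
    have h : (0:ℤ) ≤ c (i.val+1) - c i.val := by have := hcmono i.val; omega
    refine ⟨(c (i.val+1) - c i.val).toNat, ?_⟩
    show ((c (i.val+1) - c i.val : ℤ) : ℝ) / n = _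
    congr 1
    exact_mod_cast (Int.toNat_of_nonneg h).symm
  · have : ∑ i : Fin M, ν i = (((c M : ℤ) : ℝ) - ((c 0 : ℤ) : ℝ)) / n := by
      rw [hν]
      rw [← Finset.sum_div]
      congr 1
      push_cast
      rw [Fin.sum_univ_eq_sum_range (fun j => ((c (j+1) : ℝ) - (c j : ℝ)))]
      exact Finset.sum_range_sub (fun j => ((c j : ℝ))) M
    rw [this, hc0, hcM]
    push_cast
    field_simp
    rw [sub_zero]
  · intro i hne
    intro h0
    apply hne
    have : S (i.val+1) = S i.val := by rw [hSsucc, hgi, h0, add_zero]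
    simp [hν, hc, this]
  · have : ∑ i : Fin M, |μ i - ν i| ≤ ∑ _i : Fin M, (1:ℝ)/n :=
      Finset.sum_le_sum (fun i _ => habs i)
    simp only [Finset.sum_const, Finset.card_univ, Fintype.card_fin, nsmul_eq_mul] at this
    rw [show (M:ℝ)/(2*n) = 1/2*((M:ℝ)*(1/n)) by ring]
    linarith
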